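/- Let X be a compact Hausdorff space and p : X → ℝ a continuous strictly positive function. Then the map φ on E(C(X)) defined by φ(f)(x) = f(x)^{p(x)} (with 0^{p(x)} = 0) is a bijective multiplicative map of E(C(X)) onto itself: φ(fg) = φ(f)φ(g) for all f, g ∈ E(C(X)), and φ is bijective with inverse given by the exponent 1/p. -/

import Mathlib

set_option synthInstance.maxHeartbeats 1000000
set_option maxHeartbeats 1000000

/-- The effects of `C(X)`: continuous real functions with values in `[0,1]`. -/
def IsEffectFn {X : Type*} [TopologicalSpace X] (f : C(X, ℝ)) : Prop :=
  0 ≤ f ∧ f ≤ 1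

private noncomputable def powEff {X : Type*} [TopologicalSpace X]
    (q : C(X, ℝ)) (hq : ∀ x, 0 < q x)
    (f : {f : C(X, ℝ) // IsEffectFn f}) : {f : C(X, ℝ) // IsEffectFn f} :=
  ⟨⟨fun x => (f : C(X, ℝ)) x ^ (q x), by
      rw [continuous_iff_continuousAt]
      intro x
      exact (Real.continuousAt_rpow _ (Or.inr (hq x))).comp
        ((f : C(X, ℝ)).continuous.continuousAt.prodMk q.continuous.continuousAt)⟩,
    fun x => Real.rpow_nonneg (f.2.1 x) _,
    fun x => Real.rpow_le_one (f.2.1 x) (f.2.2 x) (hq x).le⟩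

theorem pow_p_is_multiplicative_bijection_of_effects
    {X : Type*} [TopologicalSpace X] [CompactSpace X] [T2Space X]
    (p : C(X, ℝ)) (hp : ∀ x, 0 < p x) :
    ∃ φ ψ : {f : C(X, ℝ) // IsEffectFn f} → {f : C(X, ℝ) // IsEffectFn f},
      (∀ f x, (φ f : C(X, ℝ)) x = (f : C(X, ℝ)) x ^ (p x)) ∧
      (∀ g x, (ψ g : C(X, ℝ)) x = (g : C(X, ℝ)) x ^ (1 / p x)) ∧
      (∀ (f g : {f : C(X, ℝ) // IsEffectFn f})
          (h : IsEffectFn ((f : C(X, ℝ)) * (g : C(X, ℝ)))),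
        (φ ⟨(f : C(X, ℝ)) * (g : C(X, ℝ)), h⟩ : C(X, ℝ)) = (φ f : C(X, ℝ)) * (φ g : C(X, ℝ))) ∧
      Function.Bijective φ ∧ ψ ∘ φ = id ∧ φ ∘ ψ = id := by
  have hq : ∀ x, 0 < 1 / p x := fun x => one_div_pos.mpr (hp x)
  set q : C(X, ℝ) := ⟨fun x => 1 / p x, continuous_const.div p.continuous fun x => (hp x).ne'⟩ with hqdef
  have key : ∀ (a b : C(X,ℝ)) (ha : ∀ x, 0 < a x) (hb : ∀ x, 0 < b x)
      (hab : ∀ x, a x * b x = 1) (f : {f : C(X, ℝ) // IsEffectFn f}),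
      powEff b hb (powEff a ha f) = f := by
    intro a b ha hb hab f
    ext x
    simp only [powEff, ContinuousMap.coe_mk]
    have h0 : (0:ℝ) ≤ (f : C(X, ℝ)) x := f.2.1 x
    rw [← Real.rpow_mul h0, hab x, Real.rpow_one]
  have hli : ∀ f, powEff q hq (powEff p hp f) = f :=
    fun f => key p q hp hq (fun x => mul_one_div_cancel (hp x).ne') f
  have hri : ∀ f, powEff p hp (powEff q hq f) = f :=
    fun f => key q p hq hp (fun x => one_div_mul_cancel (hp x).ne') f
  refine ⟨powEff p hp, powEff q hq, fun f x => rfl, fun g x => rfl, ?_, ?_, ?_, ?_⟩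
  · intro f g h
    ext x
    simp only [powEff, ContinuousMap.coe_mk, ContinuousMap.mul_apply]
    exact Real.mul_rpow (f.2.1 x) (g.2.1 x)
  · constructor
    · intro f g hfg
      have := congrArg (powEff q hq) hfg
      simpa [hli f, hli g] using this
    · intro g
      exact ⟨powEff q hq g, hri g⟩
  · exact funext hli
  · exact funext hri
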